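/- Let n ≥ 1 and ϖ ≥ 1 be integers and s ∈ ℝⁿ. Let a ∈ S_ϖ, set m = P_{≥|s|}(a), and assume b := P_ϖ(m − a) ≠ 0. Put λ = ‖m − a‖₂² / ‖b‖₂² and a' = a + λ·b. Then for every x ∈ S_{≥|s|} ∩ S_ϖ: ‖x − m‖₂² ≥ ‖x − a'‖₂² + ‖a' − m‖₂². -/

import Mathlib

open scoped BigOperators

noncomputable section

/-- Low-frequency index set `K_ω ⊆ {0,…,n−1}`. -/
def Kset (n ω : ℕ) : Set (Fin n) := {k | (k : ℕ) ≤ ω - 1 ∨ n - ω + 1 ≤ (k : ℕ)}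

/-- The set of ω-bandlimited real vectors `S_ω`. -/
def Sband (n ω : ℕ) : Set (EuclideanSpace ℝ (Fin n)) :=
  {x | ∀ k : Fin n, k ∉ Kset n ω →
    ∑ j : Fin n, (x j : ℂ) *
      Complex.exp (-(2 * (Real.pi : ℂ) * Complex.I * ((j : ℕ) : ℂ) * ((k : ℕ) : ℂ)) / (n : ℂ)) = 0}

/-- The constraint set `S_{≥|s|}`. -/
def Sgeq (n : ℕ) (s : EuclideanSpace ℝ (Fin n)) : Set (EuclideanSpace ℝ (Fin n)) :=
  {x | ∀ j, |s j| ≤ x j}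

/-- The metric projection onto `S_{≥|s|}`: componentwise `max(z_j, |s_j|)`. -/
def Pgeq (n : ℕ) (s z : EuclideanSpace ℝ (Fin n)) : EuclideanSpace ℝ (Fin n) :=
  (WithLp.equiv 2 (Fin n → ℝ)).symm (fun j => max (z j) |s j|)

/-- The rectangular low-pass filter `P_ϖ` (the orthogonal projection onto `S_ϖ`):
`(P_ϖ z)_j = (1/n)·Σ_{k∈K_ϖ} Σ_{l} z_l·cos(2πk(j−l)/n)`. -/
def Pband (n ϖ : ℕ) (z : EuclideanSpace ℝ (Fin n)) : EuclideanSpace ℝ (Fin n) :=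
  (WithLp.equiv 2 (Fin n → ℝ)).symm (fun j =>
    (1 / (n : ℝ)) *
      ∑ k ∈ Finset.univ.filter (fun k : Fin n => (k : ℕ) ≤ ϖ - 1 ∨ n - ϖ + 1 ≤ (k : ℕ)),
        ∑ l : Fin n, z l * Real.cos (2 * Real.pi * (k : ℕ) * (((j : ℕ) : ℝ) - ((l : ℕ) : ℝ)) / (n : ℝ)))

open Complex Finset
open scoped RealInnerProductSpace

lemma sum_exp_aux (n : ℕ) (hn : 0 < n) (d : ℤ) :
    ∑ j : Fin n, Complex.exp (2 * Real.pi * Complex.I * d * j / n)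
      = if (n : ℤ) ∣ d then (n : ℂ) else 0 := by
  have hn' : (n : ℂ) ≠ 0 := Nat.cast_ne_zero.mpr hn.ne'
  have hterm : ∀ j : Fin n,
      Complex.exp (2 * Real.pi * Complex.I * d * j / n)
        = Complex.exp (2 * Real.pi * Complex.I * d / n) ^ (j : ℕ) := by
    intro j
    rw [← Complex.exp_nat_mul]
    ring_nf
  simp only [hterm]
  rw [Fin.sum_univ_eq_sum_range]
  by_cases hd : (n : ℤ) ∣ d
  · obtain ⟨c, rfl⟩ := hd
    have : Complex.exp (2 * Real.pi * Complex.I * ((n:ℂ) * (c:ℂ)) / n) = 1 := by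
      rw [show 2 * (Real.pi:ℂ) * Complex.I * ((n:ℂ) * c) / n = c * (2 * Real.pi * Complex.I) by
        field_simp]
      exact Complex.exp_int_mul_two_pi_mul_I c
    push_cast
    simp [this]
  · rw [if_neg hd]
    have hz1 : Complex.exp (2 * Real.pi * Complex.I * d / n) ≠ 1 := by
      intro h
      rw [Complex.exp_eq_one_iff] at h
      obtain ⟨c, hc⟩ := h
      apply hd
      refine ⟨c, ?_⟩
      have hpi : (2 * Real.pi * Complex.I : ℂ) ≠ 0 := by
        simp [Real.pi_ne_zero, Complex.I_ne_zero]
      have : (d : ℂ) = (n : ℂ) * c := by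
        field_simp at hc
        have := mul_right_cancel₀ hpi (by linear_combination (2 * Real.pi * Complex.I) * hc :
          (d:ℂ) * (2 * Real.pi * Complex.I) = ((n:ℂ)*c) * (2*Real.pi*Complex.I))
        exact this
      exact_mod_cast this
    rw [geom_sum_eq hz1]
    have : Complex.exp (2 * Real.pi * Complex.I * d / n) ^ n = 1 := by
      rw [← Complex.exp_nat_mul]
      rw [show (n:ℂ) * (2 * Real.pi * Complex.I * d / n) = d * (2 * Real.pi * Complex.I) by
        field_simp]
      exact Complex.exp_int_mul_two_pi_mul_I d
    simp [this]

lemma sum_cos_aux (n : ℕ) (hn : 0 < n) (d : ℤ) :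
    ∑ j : Fin n, Real.cos (2 * Real.pi * d * j / n) = if (n : ℤ) ∣ d then (n : ℝ) else 0 := by
  have h := sum_exp_aux n hn d
  have h2 : ∀ j : Fin n, Complex.exp (2 * Real.pi * Complex.I * d * j / n)
      = Complex.exp (((2 * Real.pi * d * j / n : ℝ) : ℂ) * Complex.I) := by
    intro j; congr 1; push_cast; ring
  simp only [h2] at h
  have h3 := congrArg Complex.re h
  rw [Complex.re_sum] at h3
  simp only [Complex.exp_ofReal_mul_I_re] at h3
  rw [h3]
  split <;> simp

lemma sum_exp_shift (n : ℕ) (hn : 0 < n) (d : ℤ) (hd : ¬ (n : ℤ) ∣ d) (c : ℂ) :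
    ∑ j : Fin n, Complex.exp (2 * Real.pi * Complex.I * d * j / n + c) = 0 := by
  simp only [Complex.exp_add]
  rw [← Finset.sum_mul, sum_exp_aux n hn d, if_neg hd, zero_mul]

/-- real DFT cosine coefficient -/
def Cc (n : ℕ) (w : EuclideanSpace ℝ (Fin n)) (k : Fin n) : ℝ :=
  ∑ j : Fin n, w j * Real.cos (2 * Real.pi * (k : ℕ) * (j : ℕ) / n)

/-- real DFT sine coefficient -/
def Ss (n : ℕ) (w : EuclideanSpace ℝ (Fin n)) (k : Fin n) : ℝ :=
  ∑ j : Fin n, w j * Real.sin (2 * Real.pi * (k : ℕ) * (j : ℕ) / n)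

lemma band_CS {n ϖ : ℕ} {w : EuclideanSpace ℝ (Fin n)} (hw : w ∈ Sband n ϖ)
    {k : Fin n} (hk : k ∉ Kset n ϖ) : Cc n w k = 0 ∧ Ss n w k = 0 := by
  have h := hw k hk
  have h2 : ∀ j : Fin n, (w j : ℂ) *
      Complex.exp (-(2 * (Real.pi : ℂ) * Complex.I * ((j:ℕ):ℂ) * ((k:ℕ):ℂ)) / (n:ℂ))
      = ((w j * Real.cos (2 * Real.pi * (k : ℕ) * (j : ℕ) / n) : ℝ) : ℂ)
        - ((w j * Real.sin (2 * Real.pi * (k : ℕ) * (j : ℕ) / n) : ℝ) : ℂ) * Complex.I := by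
    intro j
    rw [show (-(2 * (Real.pi : ℂ) * Complex.I * ((j:ℕ):ℂ) * ((k:ℕ):ℂ)) / (n:ℂ))
        = ((-(2 * Real.pi * (k : ℕ) * (j : ℕ) / n) : ℝ) : ℂ) * Complex.I by push_cast; ring]
    rw [Complex.exp_mul_I, ← Complex.ofReal_cos, ← Complex.ofReal_sin]
    push_cast [Real.cos_neg, Real.sin_neg]
    ring
  rw [Finset.sum_congr rfl fun j _ => h2 j, Finset.sum_sub_distrib, ← Finset.sum_mul] at h
  rw [← Complex.ofReal_sum, ← Complex.ofReal_sum] at h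
  rw [Complex.ext_iff] at h
  simp only [Complex.sub_re, Complex.sub_im, Complex.ofReal_re, Complex.ofReal_im,
    Complex.mul_re, Complex.mul_im, Complex.I_re, Complex.I_im, Complex.zero_re,
    Complex.zero_im] at h
  constructor
  · have := h.1; rw [Cc]; linarith [this]
  · have := h.2; rw [Ss]; linarith [this]

lemma inner_Pband {n ϖ : ℕ} (hn : 0 < n) {w : EuclideanSpace ℝ (Fin n)}
    (hw : w ∈ Sband n ϖ) (z : EuclideanSpace ℝ (Fin n)) :
    ⟪w, Pband n ϖ z⟫ = ⟪w, z⟫ := by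
  have hn' : (n : ℝ) ≠ 0 := Nat.cast_ne_zero.mpr hn.ne'
  rw [PiLp.inner_apply, PiLp.inner_apply]
  simp only [RCLike.inner_apply, conj_trivial, Pband, WithLp.equiv_symm_apply, PiLp.toLp_apply]
  have step1 : ∑ j : Fin n, w j * ((1 / (n : ℝ)) *
      ∑ k ∈ Finset.univ.filter (fun k : Fin n => (k : ℕ) ≤ ϖ - 1 ∨ n - ϖ + 1 ≤ (k : ℕ)),
        ∑ l : Fin n, z l * Real.cos (2 * Real.pi * (k : ℕ) * (((j : ℕ) : ℝ) - ((l : ℕ) : ℝ)) / (n : ℝ)))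
      = (1 / (n : ℝ)) * ∑ k ∈ Finset.univ.filter (fun k : Fin n => (k : ℕ) ≤ ϖ - 1 ∨ n - ϖ + 1 ≤ (k : ℕ)),
          ∑ j : Fin n, ∑ l : Fin n,
            w j * (z l * Real.cos (2 * Real.pi * (k : ℕ) * (((j : ℕ) : ℝ) - ((l : ℕ) : ℝ)) / (n : ℝ))) := by
    have e1 : ∀ j : Fin n, w j * ((1 / (n : ℝ)) *
        ∑ k ∈ Finset.univ.filter (fun k : Fin n => (k : ℕ) ≤ ϖ - 1 ∨ n - ϖ + 1 ≤ (k : ℕ)),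
          ∑ l : Fin n, z l * Real.cos (2 * Real.pi * (k : ℕ) * (((j : ℕ) : ℝ) - ((l : ℕ) : ℝ)) / (n : ℝ)))
        = ∑ k ∈ Finset.univ.filter (fun k : Fin n => (k : ℕ) ≤ ϖ - 1 ∨ n - ϖ + 1 ≤ (k : ℕ)),
            (1 / (n : ℝ)) * ∑ l : Fin n,
              w j * (z l * Real.cos (2 * Real.pi * (k : ℕ) * (((j : ℕ) : ℝ) - ((l : ℕ) : ℝ)) / (n : ℝ))) := by
      intro j
      simp only [Finset.mul_sum]
      exact Finset.sum_congr rfl fun k _ => Finset.sum_congr rfl fun l _ => by ring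
    rw [Finset.sum_congr rfl fun j _ => e1 j, Finset.sum_comm, Finset.mul_sum]
    exact Finset.sum_congr rfl fun k _ => by rw [Finset.mul_sum]
  simp only [mul_comm _ (w _)]
  rw [step1]
  have hT : ∀ k : Fin n,
      (∑ j : Fin n, ∑ l : Fin n,
        w j * (z l * Real.cos (2 * Real.pi * (k : ℕ) * (((j : ℕ) : ℝ) - ((l : ℕ) : ℝ)) / (n : ℝ))))
      = Cc n w k * Cc n z k + Ss n w k * Ss n z k := by
    intro k
    rw [Cc, Cc, Ss, Ss, Finset.sum_mul_sum, Finset.sum_mul_sum, ← Finset.sum_add_distrib]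
    refine Finset.sum_congr rfl fun j _ => ?_
    rw [← Finset.sum_add_distrib]
    refine Finset.sum_congr rfl fun l _ => ?_
    rw [show 2 * Real.pi * (k : ℕ) * (((j : ℕ) : ℝ) - ((l : ℕ) : ℝ)) / (n : ℝ)
        = 2 * Real.pi * (k : ℕ) * (j : ℕ) / n - 2 * Real.pi * (k : ℕ) * (l : ℕ) / n by ring,
      Real.cos_sub]
    ring
  have hext : ∑ k ∈ Finset.univ.filter (fun k : Fin n => (k : ℕ) ≤ ϖ - 1 ∨ n - ϖ + 1 ≤ (k : ℕ)),
      (∑ j : Fin n, ∑ l : Fin n,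
        w j * (z l * Real.cos (2 * Real.pi * (k : ℕ) * (((j : ℕ) : ℝ) - ((l : ℕ) : ℝ)) / (n : ℝ))))
      = ∑ k : Fin n, (∑ j : Fin n, ∑ l : Fin n,
        w j * (z l * Real.cos (2 * Real.pi * (k : ℕ) * (((j : ℕ) : ℝ) - ((l : ℕ) : ℝ)) / (n : ℝ)))) := by
    refine Finset.sum_subset (Finset.subset_univ _) fun k _ hk => ?_
    have hkK : k ∉ Kset n ϖ := by
      simp only [Finset.mem_filter, Finset.mem_univ, true_and] at hk
      exact hk
    obtain ⟨hc, hs⟩ := band_CS hw hkK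
    rw [hT k, hc, hs]; ring
  rw [hext]
  have hpar : ∑ k : Fin n, (∑ j : Fin n, ∑ l : Fin n,
      w j * (z l * Real.cos (2 * Real.pi * (k : ℕ) * (((j : ℕ) : ℝ) - ((l : ℕ) : ℝ)) / (n : ℝ))))
      = (n : ℝ) * ∑ j : Fin n, w j * z j := by
    rw [Finset.sum_comm]
    have : ∀ j : Fin n, (∑ k : Fin n, ∑ l : Fin n,
        w j * (z l * Real.cos (2 * Real.pi * (k : ℕ) * (((j : ℕ) : ℝ) - ((l : ℕ) : ℝ)) / (n : ℝ))))
        = (n:ℝ) * (w j * z j) := by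
      intro j
      rw [Finset.sum_comm]
      have hl : ∀ l : Fin n, (∑ k : Fin n,
          w j * (z l * Real.cos (2 * Real.pi * (k : ℕ) * (((j : ℕ) : ℝ) - ((l : ℕ) : ℝ)) / (n : ℝ))))
          = w j * z l * (if j = l then (n:ℝ) else 0) := by
        intro l
        rw [← Finset.mul_sum, ← Finset.mul_sum]
        have harg : ∀ k : Fin n, Real.cos (2 * Real.pi * (k : ℕ) * (((j : ℕ) : ℝ) - ((l : ℕ) : ℝ)) / (n : ℝ))
            = Real.cos (2 * Real.pi * ((((j:ℕ):ℤ) - ((l:ℕ):ℤ) : ℤ) : ℝ) * (k : ℕ) / n) := by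
          intro k; congr 1; push_cast; ring
        rw [Finset.sum_congr rfl fun k _ => harg k, sum_cos_aux n hn _]
        have hiff : ((n : ℤ) ∣ ((j:ℕ):ℤ) - ((l:ℕ):ℤ)) ↔ j = l := by
          constructor
          · intro hd
            have habs : |((j:ℕ):ℤ) - ((l:ℕ):ℤ)| < (n:ℤ) := by
              have := j.isLt; have := l.isLt; rw [abs_lt]; omega
            have := Int.eq_zero_of_abs_lt_dvd hd habs
            have : (j : ℕ) = (l : ℕ) := by omega
            exact Fin.ext this
          · rintro rfl; simp
        by_cases hjl : j = l
        · rw [if_pos (hiff.mpr hjl), if_pos hjl]; ring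
        · rw [if_neg (fun hd => hjl (hiff.mp hd)), if_neg hjl]; ring
      rw [Finset.sum_congr rfl fun l _ => hl l]
      simp only [mul_ite, mul_zero, Finset.sum_ite_eq, Finset.mem_univ, if_true]
      ring
    rw [Finset.sum_congr rfl fun j _ => this j, ← Finset.mul_sum]
  rw [hpar, ← mul_assoc]
  field_simp

lemma Pband_mem_Sband (n ϖ : ℕ) (hn : 0 < n) (hϖ : 1 ≤ ϖ) (z : EuclideanSpace ℝ (Fin n)) :
    Pband n ϖ z ∈ Sband n ϖ := by
  intro k' hk'
  have hk'2 : ¬ ((k' : ℕ) ≤ ϖ - 1 ∨ n - ϖ + 1 ≤ (k' : ℕ)) := hk'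
  push_neg at hk'2
  simp only [Pband, WithLp.equiv_symm_apply, PiLp.toLp_apply]
  have step1 : ∀ j : Fin n,
      ((((1/(n:ℝ)) * ∑ k ∈ Finset.univ.filter (fun k : Fin n => (k : ℕ) ≤ ϖ - 1 ∨ n - ϖ + 1 ≤ (k : ℕ)),
        ∑ l : Fin n, z l * Real.cos (2 * Real.pi * (k : ℕ) * (((j : ℕ) : ℝ) - ((l : ℕ) : ℝ)) / (n : ℝ)) : ℝ)) : ℂ) *
        Complex.exp (-(2 * (Real.pi : ℂ) * Complex.I * ((j : ℕ) : ℂ) * ((k' : ℕ) : ℂ)) / (n : ℂ))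
      = ∑ k ∈ Finset.univ.filter (fun k : Fin n => (k : ℕ) ≤ ϖ - 1 ∨ n - ϖ + 1 ≤ (k : ℕ)),
        ∑ l : Fin n, 1/(n:ℂ) * ((z l : ℂ) * (Real.cos (2 * Real.pi * (k : ℕ) * (((j : ℕ) : ℝ) - ((l : ℕ) : ℝ)) / (n : ℝ)) : ℂ) *
          Complex.exp (-(2 * (Real.pi : ℂ) * Complex.I * ((j : ℕ) : ℂ) * ((k' : ℕ) : ℂ)) / (n : ℂ))) := by
    intro j
    push_cast
    rw [Finset.mul_sum, Finset.sum_mul]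
    refine Finset.sum_congr rfl fun k _ => ?_
    rw [Finset.mul_sum, Finset.sum_mul]
    refine Finset.sum_congr rfl fun l _ => ?_
    ring
  rw [Finset.sum_congr rfl fun j _ => step1 j, Finset.sum_comm]
  refine Finset.sum_eq_zero fun k hk => ?_
  rw [Finset.sum_comm]
  refine Finset.sum_eq_zero fun l _ => ?_
  simp only [← Finset.mul_sum]
  rw [mul_eq_zero]; right
  have hkK : (k : ℕ) ≤ ϖ - 1 ∨ n - ϖ + 1 ≤ (k : ℕ) := by
    simpa using hk
  have hd1 : ¬ ((n : ℤ) ∣ ((k : ℕ) : ℤ) - ((k' : ℕ) : ℤ)) := by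
    intro hdvd
    have habs : |((k : ℕ) : ℤ) - ((k' : ℕ) : ℤ)| < (n : ℤ) := by
      have := k.isLt; have := k'.isLt
      rw [abs_lt]; omega
    have h0 := Int.eq_zero_of_abs_lt_dvd hdvd habs
    have : (k : ℕ) = (k' : ℕ) := by omega
    have := hk'2.1; have := hk'2.2
    omega
  have hd2 : ¬ ((n : ℤ) ∣ -(((k : ℕ) : ℤ) + ((k' : ℕ) : ℤ))) := by
    rw [dvd_neg]
    intro hdvd
    have hdvd' : n ∣ ((k : ℕ) + (k' : ℕ)) := by exact_mod_cast hdvd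
    have hcase : (k : ℕ) + (k' : ℕ) = 0 ∨ (k : ℕ) + (k' : ℕ) = n := by
      rcases Nat.lt_or_ge ((k : ℕ) + (k' : ℕ)) n with h | h
      · left; exact Nat.eq_zero_of_dvd_of_lt hdvd' h |>.symm ▸ rfl
      · right
        have h2 : ((k : ℕ) + (k' : ℕ)) - n < n := by
          have := k.isLt; have := k'.isLt; omega
        have h3 : n ∣ ((k : ℕ) + (k' : ℕ)) - n := (Nat.dvd_sub hdvd' dvd_rfl)
        have := Nat.eq_zero_of_dvd_of_lt h3 h2
        omega
    have := hk'2.1; have := hk'2.2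
    have := k.isLt; have := k'.isLt
    rcases hkK with h | h <;> rcases hcase with h' | h' <;> omega
  have hterm : ∀ j : Fin n,
      (z l : ℂ) * (Real.cos (2 * Real.pi * (k : ℕ) * (((j : ℕ) : ℝ) - ((l : ℕ) : ℝ)) / (n : ℝ)) : ℂ) *
        Complex.exp (-(2 * (Real.pi : ℂ) * Complex.I * ((j : ℕ) : ℂ) * ((k' : ℕ) : ℂ)) / (n : ℂ))
      = (z l : ℂ)/2 *
          (Complex.exp (2 * Real.pi * Complex.I * ((((k:ℕ):ℤ) - ((k':ℕ):ℤ) : ℤ) : ℂ) * (j:ℕ) / n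
              + (-(2 * Real.pi * Complex.I * (k:ℕ) * (l:ℕ)) / n))
           + Complex.exp (2 * Real.pi * Complex.I * ((-(((k:ℕ):ℤ) + ((k':ℕ):ℤ)) : ℤ) : ℂ) * (j:ℕ) / n
              + (2 * Real.pi * Complex.I * (k:ℕ) * (l:ℕ) / n))) := by
    intro j
    rw [Complex.ofReal_cos, Complex.cos]
    have hn' : (n : ℂ) ≠ 0 := Nat.cast_ne_zero.mpr hn.ne'
    have he1 : Complex.exp (((2 * Real.pi * (k : ℕ) * (((j : ℕ) : ℝ) - ((l : ℕ) : ℝ)) / (n : ℝ) : ℝ) : ℂ) * Complex.I) *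
        Complex.exp (-(2 * (Real.pi:ℂ) * Complex.I * ((j : ℕ) : ℂ) * ((k' : ℕ) : ℂ)) / (n : ℂ))
        = Complex.exp (2 * Real.pi * Complex.I * ((((k:ℕ):ℤ) - ((k':ℕ):ℤ) : ℤ) : ℂ) * (j:ℕ) / n
              + (-(2 * Real.pi * Complex.I * (k:ℕ) * (l:ℕ)) / n)) := by
      rw [← Complex.exp_add]; congr 1; push_cast; field_simp; ring
    have he2 : Complex.exp (-(((2 * Real.pi * (k : ℕ) * (((j : ℕ) : ℝ) - ((l : ℕ) : ℝ)) / (n : ℝ) : ℝ) : ℂ)) * Complex.I) *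
        Complex.exp (-(2 * (Real.pi:ℂ) * Complex.I * ((j : ℕ) : ℂ) * ((k' : ℕ) : ℂ)) / (n : ℂ))
        = Complex.exp (2 * Real.pi * Complex.I * ((-(((k:ℕ):ℤ) + ((k':ℕ):ℤ)) : ℤ) : ℂ) * (j:ℕ) / n
              + (2 * Real.pi * Complex.I * (k:ℕ) * (l:ℕ) / n)) := by
      rw [← Complex.exp_add]; congr 1; push_cast; field_simp; ring
    linear_combination ((z l : ℂ)/2) * he1 + ((z l : ℂ)/2) * he2
  rw [Finset.sum_congr rfl fun j _ => hterm j]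
  rw [← Finset.mul_sum, Finset.sum_add_distrib]
  rw [sum_exp_shift n hn _ hd1 _, sum_exp_shift n hn _ hd2 _]
  simp

lemma sub_mem_Sband {n ϖ : ℕ} {x a : EuclideanSpace ℝ (Fin n)}
    (hx : x ∈ Sband n ϖ) (ha : a ∈ Sband n ϖ) : x - a ∈ Sband n ϖ := by
  intro k hk
  have h1 := hx k hk
  have h2 := ha k hk
  have h3 : ∀ j : Fin n, ((x - a) j : ℂ) *
      Complex.exp (-(2 * (Real.pi : ℂ) * Complex.I * ((j:ℕ):ℂ) * ((k:ℕ):ℂ)) / (n:ℂ))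
      = (x j : ℂ) * Complex.exp (-(2 * (Real.pi : ℂ) * Complex.I * ((j:ℕ):ℂ) * ((k:ℕ):ℂ)) / (n:ℂ))
        - (a j : ℂ) * Complex.exp (-(2 * (Real.pi : ℂ) * Complex.I * ((j:ℕ):ℂ) * ((k:ℕ):ℂ)) / (n:ℂ)) := by
    intro j
    rw [PiLp.sub_apply]
    push_cast
    ring
  rw [Finset.sum_congr rfl fun j _ => h3 j, Finset.sum_sub_distrib, h1, h2, sub_zero]

/-- Fejér-type inequality for one AP-A step. -/
theorem APA_step_inequality
    (n ϖ : ℕ) (hn : 1 ≤ n) (hϖ : 1 ≤ ϖ) (s : EuclideanSpace ℝ (Fin n))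
    (a : EuclideanSpace ℝ (Fin n)) (ha : a ∈ Sband n ϖ)
    (m b : EuclideanSpace ℝ (Fin n))
    (hm : m = Pgeq n s a) (hb : b = Pband n ϖ (m - a)) (hbne : b ≠ 0)
    (lam : ℝ) (hlam : lam = ‖m - a‖ ^ 2 / ‖b‖ ^ 2)
    (a' : EuclideanSpace ℝ (Fin n)) (ha' : a' = a + lam • b) :
    ∀ x ∈ Sgeq n s ∩ Sband n ϖ,
      ‖x - a'‖ ^ 2 + ‖a' - m‖ ^ 2 ≤ ‖x - m‖ ^ 2 := by
  intro x hx
  obtain ⟨hx1, hx2⟩ := hx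
  have hn0 : 0 < n := hn
  have hbS : b ∈ Sband n ϖ := hb ▸ Pband_mem_Sband n ϖ hn0 hϖ (m - a)
  have hxaS : x - a ∈ Sband n ϖ := sub_mem_Sband hx2 ha
  -- inner product facts
  have h1 : ⟪x - a, b⟫ = ⟪x - a, m - a⟫ := by
    rw [hb]; exact inner_Pband hn0 hxaS (m - a)
  have h2 : ⟪b, m - a⟫ = ‖b‖ ^ 2 := by
    have h := inner_Pband hn0 hbS (m - a)
    rw [← hb] at h
    rw [← h, real_inner_self_eq_norm_sq]
  have hbnorm : 0 < ‖b‖ := norm_pos_iff.mpr hbne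
  have hbpos : 0 < ‖b‖ ^ 2 := pow_pos hbnorm 2
  have hble : ‖b‖ ^ 2 ≤ ‖b‖ * ‖m - a‖ := h2 ▸ real_inner_le_norm b (m - a)
  have hbm : ‖b‖ ≤ ‖m - a‖ := by
    nlinarith
  have hlam1 : 1 ≤ lam := by
    rw [hlam, le_div_iff₀ hbpos]
    nlinarith
  have hlb : lam * ‖b‖ ^ 2 = ‖m - a‖ ^ 2 := by
    rw [hlam]; field_simp
  -- obtuse angle at projection m
  have hxm : 0 ≤ ⟪x - m, m - a⟫ := by
    rw [PiLp.inner_apply]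
    refine Finset.sum_nonneg fun j _ => ?_
    simp only [RCLike.inner_apply, conj_trivial, PiLp.sub_apply]
    have hmj : m j = max (a j) |s j| := by
      rw [hm]; rfl
    have hsx : |s j| ≤ x j := hx1 j
    rcases le_total (|s j|) (a j) with h | h
    · rw [hmj, max_eq_left h]; simp
    · rw [hmj, max_eq_right h]
      have h4 : 0 ≤ x j - |s j| := by linarith
      have h5 : 0 ≤ |s j| - a j := by linarith
      exact mul_nonneg h5 h4
  have hT2 : ⟪x - m, m - a⟫ = ⟪x - a, m - a⟫ - ‖m - a‖ ^ 2 := by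
    rw [show x - m = (x - a) - (m - a) by abel, inner_sub_left, real_inner_self_eq_norm_sq]
  -- key identity
  have hkey : ⟪x - a', a' - m⟫ = (lam - 1) * ⟪x - m, m - a⟫ := by
    rw [ha', show x - (a + lam • b) = (x - a) - lam • b by abel,
      show (a + lam • b) - m = lam • b - (m - a) by abel, hT2]
    simp only [inner_sub_left, inner_sub_right, real_inner_smul_left, real_inner_smul_right,
      real_inner_self_eq_norm_sq] at h1 h2 ⊢
    have hsm : ‖lam • b‖ ^ 2 = lam ^ 2 * ‖b‖ ^ 2 := by
      rw [norm_smul]; simp [mul_pow, sq_abs]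
    linear_combination lam * h1 + lam * h2 + (1 - lam) * hlb - hsm
  have hnn : 0 ≤ ⟪x - a', a' - m⟫ := by
    rw [hkey]
    exact mul_nonneg (by linarith) hxm
  have hexp : ‖x - m‖ ^ 2 = ‖x - a'‖ ^ 2 + 2 * ⟪x - a', a' - m⟫ + ‖a' - m‖ ^ 2 := by
    rw [show x - m = (x - a') + (a' - m) by abel]
    exact norm_add_sq_real _ _
  linarith
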